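/- arXiv:1408.4227 — 2 statements merged into one kernel-verified Lean document; each statement's English description precedes it below -/
import Mathlib

section
/- Let T be the triangle in the plane with vertices A1=(0,0), A2=(1,0), A3=(0,1). Fix cut points D=(x0,0) and E=(0,y0) with 0<x0<1 and 0<y0<1, let T− be the subtriangle with vertices A1, D, E and T+ = T\T−, and let n be a unit normal vector to the segment DE. Fix Lamé constants μ+, μ− > 0 and λ+, λ− > 0. Then for every prescribed vector (g1,...,g6) ∈ ℝ^6 there exists a unique pair (φ+, φ−) of affine maps from ℝ^2 to ℝ^2 such that: (i) φ+(D)=φ−(D) and φ+(E)=φ−(E); (ii) σ+(φ+)·n = σ−(φ−)·n (the Laplace–Young jump condition across DE); (iii) the averages over the edge e1 from A2 to A3 of the first and second components of φ+ equal g1 and g4, the averages over the edge e2 from A1 to A3 of the piecewise function (equal to φ− on the part from A1 to E and to φ+ on the part from E to A3) have first and second components g2 and g5, and the averages over the edge e3 from A1 to A2 of the piecewise function (equal to φ− from A1 to D and to φ+ from D to A2) have first and second components g3 and g6. -/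
open Matrix

lemma intE1 (B : Matrix (Fin 2) (Fin 2) ℝ) (a : Fin 2 → ℝ) (i : Fin 2) :
    (∫ t in (0:ℝ)..1, (B.mulVec ![1 - t, t] + a) i) = B i 0 / 2 + B i 1 / 2 + a i := by
  have h : (fun t : ℝ => (B.mulVec ![1 - t, t] + a) i)
      = fun t => (B i 1 - B i 0) * t + (B i 0 + a i) := by
    funext t
    fin_cases i <;> simp [Matrix.mulVec, dotProduct, Fin.sum_univ_two] <;>
    ring
  rw [intervalIntegral.integral_congr (g := fun t => (B i 1 - B i 0) * t + (B i 0 + a i))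
      (fun t _ => congrFun h t),
    intervalIntegral.integral_add (f := fun x : ℝ => (B i 1 - B i 0) * x)
      ((continuous_const.mul continuous_id :
        Continuous fun x : ℝ => (B i 1 - B i 0) * x).intervalIntegrable 0 1)
      (intervalIntegrable_const), intervalIntegral.integral_const_mul, integral_id,
    intervalIntegral.integral_const]
  simp [smul_eq_mul]; ring

lemma intE2 (B : Matrix (Fin 2) (Fin 2) ℝ) (a : Fin 2 → ℝ) (i : Fin 2) (c d : ℝ) :
    (∫ t in c..d, (B.mulVec ![0, t] + a) i) = B i 1 * (d ^ 2 - c ^ 2) / 2 + a i * (d - c) := by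
  have h : (fun t : ℝ => (B.mulVec ![0, t] + a) i)
      = fun t => B i 1 * t + a i := by
    funext t
    fin_cases i <;> simp [Matrix.mulVec, dotProduct, Fin.sum_univ_two]
  rw [intervalIntegral.integral_congr (g := fun t => B i 1 * t + a i)
      (fun t _ => congrFun h t),
    intervalIntegral.integral_add (f := fun x : ℝ => B i 1 * x)
      ((continuous_const.mul continuous_id :
        Continuous fun x : ℝ => B i 1 * x).intervalIntegrable c d)
      (intervalIntegrable_const), intervalIntegral.integral_const_mul, integral_id,
    intervalIntegral.integral_const]
  simp [smul_eq_mul]; ring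

lemma intE3 (B : Matrix (Fin 2) (Fin 2) ℝ) (a : Fin 2 → ℝ) (i : Fin 2) (c d : ℝ) :
    (∫ t in c..d, (B.mulVec ![t, 0] + a) i) = B i 0 * (d ^ 2 - c ^ 2) / 2 + a i * (d - c) := by
  have h : (fun t : ℝ => (B.mulVec ![t, 0] + a) i)
      = fun t => B i 0 * t + a i := by
    funext t
    fin_cases i <;> simp [Matrix.mulVec, dotProduct, Fin.sum_univ_two]
  rw [intervalIntegral.integral_congr (g := fun t => B i 0 * t + a i)
      (fun t _ => congrFun h t),
    intervalIntegral.integral_add (f := fun x : ℝ => B i 0 * x)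
      ((continuous_const.mul continuous_id :
        Continuous fun x : ℝ => B i 0 * x).intervalIntegrable c d)
      (intervalIntegrable_const), intervalIntegral.integral_const_mul, integral_id,
    intervalIntegral.integral_const]
  simp [smul_eq_mul]; ring

lemma mulVec2 (B : Matrix (Fin 2) (Fin 2) ℝ) (v : Fin 2 → ℝ) (i : Fin 2) :
    B.mulVec v i = B i 0 * v 0 + B i 1 * v 1 := by
  simp [Matrix.mulVec, dotProduct, Fin.sum_univ_two]

lemma sigmaVec (μ l : ℝ) (B : Matrix (Fin 2) (Fin 2) ℝ) (v : Fin 2 → ℝ) (i : Fin 2) :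
    (μ • (B + Bᵀ) + (l * B.trace) • (1 : Matrix (Fin 2) (Fin 2) ℝ)).mulVec v i
      = μ * (B i 0 + B 0 i) * v 0 + μ * (B i 1 + B 1 i) * v 1
        + (l * (B 0 0 + B 1 1)) * v i := by
  fin_cases i <;>
    (simp [Matrix.mulVec, dotProduct, Fin.sum_univ_two, Matrix.trace_fin_two,
      Matrix.one_apply, Matrix.add_apply, Matrix.smul_apply, Matrix.transpose_apply,
      smul_eq_mul]; ring)

/-- **Unisolvence of the broken Crouzeix–Raviart immersed basis (Proposition 3.2).**
On the reference triangle with vertices `A1 = (0,0)`, `A2 = (1,0)`, `A3 = (0,1)`, cut by the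
segment from `D = (x0, 0)` to `E = (0, y0)` with unit normal `n`, and for Lamé constants
`μ⁺, μ⁻, λ⁺, λ⁻ > 0`, every choice of the six edge-average values `g` determines a unique pair
of affine maps `φ⁺ p = B⁺ p + a⁺`, `φ⁻ p = B⁻ p + a⁻` (encoded by the pairs
`(B⁺, a⁺)` and `(B⁻, a⁻)`) that are continuous at `D` and `E`, satisfy the Laplace–Young
stress-jump condition `σ⁺(φ⁺)·n = σ⁻(φ⁻)·n` across `DE`
(where `σˢ(φˢ) = 2 μˢ ε(φˢ) + λˢ tr(ε(φˢ)) I = μˢ (Bˢ + Bˢᵀ) + λˢ (tr Bˢ) I`),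
and have the prescribed averages over the three edges (the edges `e2`, `e3` meeting the cut
are split, using `φ⁻` on the part towards `A1` and `φ⁺` on the remaining part). -/
theorem broken_CR_basis_unisolvent
    (x0 y0 : ℝ) (hx0 : 0 < x0) (hx1 : x0 < 1) (hy0 : 0 < y0) (hy1 : y0 < 1)
    (μp μm lp lm : ℝ) (hμp : 0 < μp) (hμm : 0 < μm) (hlp : 0 < lp) (hlm : 0 < lm)
    (n : Fin 2 → ℝ) (hunit : (n 0) ^ 2 + (n 1) ^ 2 = 1)
    (hperp : n 0 * (0 - x0) + n 1 * (y0 - 0) = 0)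
    (g : Fin 6 → ℝ) :
    ∃! q : (Matrix (Fin 2) (Fin 2) ℝ × (Fin 2 → ℝ)) × (Matrix (Fin 2) (Fin 2) ℝ × (Fin 2 → ℝ)),
      let φp : (Fin 2 → ℝ) → (Fin 2 → ℝ) := fun p => q.1.1.mulVec p + q.1.2
      let φm : (Fin 2 → ℝ) → (Fin 2 → ℝ) := fun p => q.2.1.mulVec p + q.2.2
      let σp : Matrix (Fin 2) (Fin 2) ℝ :=
        μp • (q.1.1 + q.1.1ᵀ) + (lp * q.1.1.trace) • (1 : Matrix (Fin 2) (Fin 2) ℝ)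
      let σm : Matrix (Fin 2) (Fin 2) ℝ :=
        μm • (q.2.1 + q.2.1ᵀ) + (lm * q.2.1.trace) • (1 : Matrix (Fin 2) (Fin 2) ℝ)
      -- continuity at the cut points D = (x0, 0) and E = (0, y0)
      φp ![x0, 0] = φm ![x0, 0] ∧
      φp ![0, y0] = φm ![0, y0] ∧
      -- Laplace–Young condition across DE
      σp.mulVec n = σm.mulVec n ∧
      -- averages over edge e1 from A2 = (1,0) to A3 = (0,1)
      (∫ t in (0:ℝ)..1, φp ![1 - t, t] 0) = g 0 ∧
      (∫ t in (0:ℝ)..1, φp ![1 - t, t] 1) = g 3 ∧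
      -- averages over edge e2 from A1 = (0,0) to A3 = (0,1), split at E
      ((∫ t in (0:ℝ)..y0, φm ![0, t] 0) + ∫ t in y0..1, φp ![0, t] 0) = g 1 ∧
      ((∫ t in (0:ℝ)..y0, φm ![0, t] 1) + ∫ t in y0..1, φp ![0, t] 1) = g 4 ∧
      -- averages over edge e3 from A1 = (0,0) to A2 = (1,0), split at D
      ((∫ t in (0:ℝ)..x0, φm ![t, 0] 0) + ∫ t in x0..1, φp ![t, 0] 0) = g 2 ∧
      ((∫ t in (0:ℝ)..x0, φm ![t, 0] 1) + ∫ t in x0..1, φp ![t, 0] 1) = g 5 := by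
  have hkey : n 1 * y0 = n 0 * x0 := by linear_combination hperp
  have hn0 : n 0 ≠ 0 := by
    intro h
    have h2 : n 1 * y0 = 0 := by rw [hkey, h]; ring
    rcases mul_eq_zero.mp h2 with h3 | h3
    · rw [h, h3] at hunit; norm_num at hunit
    · exact absurd h3 hy0.ne'
  have h1K : 0 < x0 * y0 := mul_pos hx0 hy0
  have h2K : x0 * y0 < 1 := by nlinarith
  have hAc : 0 < x0*y0*μp + (1 - x0*y0)*μm := by
    have t1 : 0 < x0*y0*μp := mul_pos h1K hμp
    have t2 : 0 < (1 - x0*y0)*μm := mul_pos (by linarith) hμm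
    linarith
  have hBc : 0 < x0*y0*(μp+lp) + (1 - x0*y0)*(μm+lm) := by
    have t1 : 0 < x0*y0*(μp+lp) := mul_pos h1K (by linarith)
    have t2 : 0 < (1 - x0*y0)*(μm+lm) := mul_pos (by linarith) (by linarith)
    linarith
  -- solve for the auxiliary pair (c0s, c1s)
  obtain ⟨gam, hgam⟩ :
      ∃ gm : ℝ, ((x0*y0*μp + (1 - x0*y0)*μm) + (x0*y0*(μp+lp) + (1 - x0*y0)*(μm+lm))) * gm
        = ((μp - μm)*(2*(2*(g 0 - g 1))*n 0 + (2*(g 0 - g 2) + 2*(g 3 - g 4))*n 1)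
            + (lp - lm)*(2*(g 0 - g 1) + 2*(g 3 - g 5))*n 0) * n 0
          + ((μp - μm)*((2*(g 3 - g 4) + 2*(g 0 - g 2))*n 0 + 2*(2*(g 3 - g 5))*n 1)
            + (lp - lm)*(2*(g 0 - g 1) + 2*(g 3 - g 5))*n 1) * n 1 := by
    refine ⟨(((μp - μm)*(2*(2*(g 0 - g 1))*n 0 + (2*(g 0 - g 2) + 2*(g 3 - g 4))*n 1)
            + (lp - lm)*(2*(g 0 - g 1) + 2*(g 3 - g 5))*n 0) * n 0
          + ((μp - μm)*((2*(g 3 - g 4) + 2*(g 0 - g 2))*n 0 + 2*(2*(g 3 - g 5))*n 1)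
            + (lp - lm)*(2*(g 0 - g 1) + 2*(g 3 - g 5))*n 1) * n 1)
        / ((x0*y0*μp + (1 - x0*y0)*μm) + (x0*y0*(μp+lp) + (1 - x0*y0)*(μm+lm))), ?_⟩
    exact mul_div_cancel₀ _ (by linarith : (0:ℝ) < (x0*y0*μp + (1 - x0*y0)*μm)
      + (x0*y0*(μp+lp) + (1 - x0*y0)*(μm+lm))).ne'
  obtain ⟨c0s, hc0s⟩ :
      ∃ c : ℝ, (x0*y0*μp + (1 - x0*y0)*μm) * c
        = ((μp - μm)*(2*(2*(g 0 - g 1))*n 0 + (2*(g 0 - g 2) + 2*(g 3 - g 4))*n 1)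
            + (lp - lm)*(2*(g 0 - g 1) + 2*(g 3 - g 5))*n 0)
          - (x0*y0*(μp+lp) + (1 - x0*y0)*(μm+lm)) * gam * n 0 := by
    exact ⟨_ / (x0*y0*μp + (1 - x0*y0)*μm), mul_div_cancel₀ _ hAc.ne'⟩
  obtain ⟨c1s, hc1s⟩ :
      ∃ c : ℝ, (x0*y0*μp + (1 - x0*y0)*μm) * c
        = ((μp - μm)*((2*(g 3 - g 4) + 2*(g 0 - g 2))*n 0 + 2*(2*(g 3 - g 5))*n 1)
            + (lp - lm)*(2*(g 0 - g 1) + 2*(g 3 - g 5))*n 1)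
          - (x0*y0*(μp+lp) + (1 - x0*y0)*(μm+lm)) * gam * n 1 := by
    exact ⟨_ / (x0*y0*μp + (1 - x0*y0)*μm), mul_div_cancel₀ _ hAc.ne'⟩
  have hgs : c0s * n 0 + c1s * n 1 = gam := by
    have h' : (x0*y0*μp + (1 - x0*y0)*μm) * (c0s * n 0 + c1s * n 1)
        = (x0*y0*μp + (1 - x0*y0)*μm) * gam := by
      linear_combination n 0 * hc0s + n 1 * hc1s - hgam
        - (x0*y0*(μp+lp) + (1 - x0*y0)*(μm+lm)) * gam * hunit
    exact mul_left_cancel₀ hAc.ne' h'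
  have hs0 : (x0*y0*μp + (1 - x0*y0)*μm) * c0s
      + (x0*y0*(μp+lp) + (1 - x0*y0)*(μm+lm)) * (c0s * n 0 + c1s * n 1) * n 0
      = (μp - μm)*(2*(2*(g 0 - g 1))*n 0 + (2*(g 0 - g 2) + 2*(g 3 - g 4))*n 1)
        + (lp - lm)*(2*(g 0 - g 1) + 2*(g 3 - g 5))*n 0 := by
    rw [hgs]; linear_combination hc0s
  have hs1 : (x0*y0*μp + (1 - x0*y0)*μm) * c1s
      + (x0*y0*(μp+lp) + (1 - x0*y0)*(μm+lm)) * (c0s * n 0 + c1s * n 1) * n 1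
      = (μp - μm)*((2*(g 3 - g 4) + 2*(g 0 - g 2))*n 0 + 2*(2*(g 3 - g 5))*n 1)
        + (lp - lm)*(2*(g 0 - g 1) + 2*(g 3 - g 5))*n 1 := by
    rw [hgs]; linear_combination hc1s
  refine ⟨((!![2*(g 0 - g 1) - x0*y0*n 0*c0s, 2*(g 0 - g 2) - x0*y0*n 1*c0s;
               2*(g 3 - g 4) - x0*y0*n 0*c1s, 2*(g 3 - g 5) - x0*y0*n 1*c1s],
            ![g 1 + g 2 - g 0 + x0*y0*(n 0 + n 1)*c0s/2,
              g 4 + g 5 - g 3 + x0*y0*(n 0 + n 1)*c1s/2]),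
           (!![2*(g 0 - g 1) - x0*y0*n 0*c0s + c0s*n 0, 2*(g 0 - g 2) - x0*y0*n 1*c0s + c0s*n 1;
               2*(g 3 - g 4) - x0*y0*n 0*c1s + c1s*n 0, 2*(g 3 - g 5) - x0*y0*n 1*c1s + c1s*n 1],
            ![g 1 + g 2 - g 0 + x0*y0*(n 0 + n 1)*c0s/2 - c0s*n 0*x0,
              g 4 + g 5 - g 3 + x0*y0*(n 0 + n 1)*c1s/2 - c1s*n 0*x0])), ?_, ?_⟩
  · refine ⟨?_, ?_, ?_, ?_, ?_, ?_, ?_, ?_, ?_⟩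
    · funext i; fin_cases i <;>
        (simp only [Pi.add_apply, mulVec2, Fin.mk_zero, Fin.mk_one, Fin.isValue, Matrix.cons_val', Matrix.cons_val_zero, Matrix.cons_val_one, Matrix.head_cons,
          Matrix.empty_val', Matrix.cons_val_fin_one, Matrix.head_fin_const, Matrix.of_apply]; ring)
    · funext i; fin_cases i
      · simp only [Pi.add_apply, mulVec2, Fin.mk_zero, Fin.mk_one, Fin.isValue, Matrix.cons_val', Matrix.cons_val_zero, Matrix.cons_val_one, Matrix.head_cons,
          Matrix.empty_val', Matrix.cons_val_fin_one, Matrix.head_fin_const, Matrix.of_apply]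
        linear_combination (-c0s) * hkey
      · simp only [Pi.add_apply, mulVec2, Fin.mk_zero, Fin.mk_one, Fin.isValue, Matrix.cons_val', Matrix.cons_val_zero, Matrix.cons_val_one, Matrix.head_cons,
          Matrix.empty_val', Matrix.cons_val_fin_one, Matrix.head_fin_const, Matrix.of_apply]
        linear_combination (-c1s) * hkey
    · funext i
      rw [sigmaVec, sigmaVec]
      fin_cases i
      · simp only [Fin.mk_zero, Fin.mk_one, Fin.isValue, Matrix.cons_val', Matrix.cons_val_zero, Matrix.cons_val_one, Matrix.head_cons,
          Matrix.empty_val', Matrix.cons_val_fin_one, Matrix.head_fin_const, Matrix.of_apply]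
        linear_combination (-1) * hs0 - (x0*y0*μp + (1 - x0*y0)*μm) * c0s * hunit
      · simp only [Fin.mk_zero, Fin.mk_one, Fin.isValue, Matrix.cons_val', Matrix.cons_val_zero, Matrix.cons_val_one, Matrix.head_cons,
          Matrix.empty_val', Matrix.cons_val_fin_one, Matrix.head_fin_const, Matrix.of_apply]
        linear_combination (-1) * hs1 - (x0*y0*μp + (1 - x0*y0)*μm) * c1s * hunit
    · simp only [intE1, Fin.mk_zero, Fin.mk_one, Fin.isValue, Matrix.cons_val', Matrix.cons_val_zero, Matrix.cons_val_one, Matrix.head_cons,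
          Matrix.empty_val', Matrix.cons_val_fin_one, Matrix.head_fin_const, Matrix.of_apply]; ring
    · simp only [intE1, Fin.mk_zero, Fin.mk_one, Fin.isValue, Matrix.cons_val', Matrix.cons_val_zero, Matrix.cons_val_one, Matrix.head_cons,
          Matrix.empty_val', Matrix.cons_val_fin_one, Matrix.head_fin_const, Matrix.of_apply]; ring
    · simp only [intE2, Fin.mk_zero, Fin.mk_one, Fin.isValue, Matrix.cons_val', Matrix.cons_val_zero, Matrix.cons_val_one, Matrix.head_cons,
          Matrix.empty_val', Matrix.cons_val_fin_one, Matrix.head_fin_const, Matrix.of_apply]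
      linear_combination (c0s*y0/2) * hkey
    · simp only [intE2, Fin.mk_zero, Fin.mk_one, Fin.isValue, Matrix.cons_val', Matrix.cons_val_zero, Matrix.cons_val_one, Matrix.head_cons,
          Matrix.empty_val', Matrix.cons_val_fin_one, Matrix.head_fin_const, Matrix.of_apply]
      linear_combination (c1s*y0/2) * hkey
    · simp only [intE3, Fin.mk_zero, Fin.mk_one, Fin.isValue, Matrix.cons_val', Matrix.cons_val_zero, Matrix.cons_val_one, Matrix.head_cons,
          Matrix.empty_val', Matrix.cons_val_fin_one, Matrix.head_fin_const, Matrix.of_apply]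
      linear_combination (c0s*x0/2) * hkey
    · simp only [intE3, Fin.mk_zero, Fin.mk_one, Fin.isValue, Matrix.cons_val', Matrix.cons_val_zero, Matrix.cons_val_one, Matrix.head_cons,
          Matrix.empty_val', Matrix.cons_val_fin_one, Matrix.head_fin_const, Matrix.of_apply]
      linear_combination (c1s*x0/2) * hkey
  · rintro ⟨⟨Bp, ap⟩, ⟨Bm, am⟩⟩ ⟨h1, h2, h3, h4, h5, h6, h7, h8, h9⟩
    have hD0 := congrFun h1 0
    have hD1 := congrFun h1 1
    have hE0 := congrFun h2 0
    have hE1 := congrFun h2 1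
    have hJ0 := congrFun h3 0
    have hJ1 := congrFun h3 1
    simp only [sigmaVec] at hJ0 hJ1
    simp only [Pi.add_apply, mulVec2, Matrix.cons_val_zero, Matrix.cons_val_one,
      Matrix.head_cons] at hD0 hD1 hE0 hE1
    simp only [intE1, intE2, intE3] at h4 h5 h6 h7 h8 h9
    obtain ⟨c0, hc0⟩ : ∃ c : ℝ, Bm 0 0 = Bp 0 0 + c * n 0 :=
      ⟨(Bm 0 0 - Bp 0 0) / n 0, by rw [div_mul_cancel₀ _ hn0]; ring⟩
    obtain ⟨c1, hc1⟩ : ∃ c : ℝ, Bm 1 0 = Bp 1 0 + c * n 0 :=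
      ⟨(Bm 1 0 - Bp 1 0) / n 0, by rw [div_mul_cancel₀ _ hn0]; ring⟩
    have ham0 : am 0 = ap 0 - c0 * (n 0 * x0) := by linear_combination -hD0 - x0 * hc0
    have ham1 : am 1 = ap 1 - c1 * (n 0 * x0) := by linear_combination -hD1 - x0 * hc1
    have hbm01 : Bm 0 1 = Bp 0 1 + c0 * n 1 := by
      have h' : Bm 0 1 * y0 = (Bp 0 1 + c0 * n 1) * y0 := by
        linear_combination -hE0 - ham0 - c0 * hkey
      exact mul_right_cancel₀ hy0.ne' h'
    have hbm11 : Bm 1 1 = Bp 1 1 + c1 * n 1 := by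
      have h' : Bm 1 1 * y0 = (Bp 1 1 + c1 * n 1) * y0 := by
        linear_combination -hE1 - ham1 - c1 * hkey
      exact mul_right_cancel₀ hy0.ne' h'
    rw [hbm01, ham0] at h6
    rw [hbm11, ham1] at h7
    rw [hc0, ham0] at h8
    rw [hc1, ham1] at h9
    rw [hc0, hc1, hbm01, hbm11] at hJ0 hJ1
    have hbp00 : Bp 0 0 = 2*(g 0 - g 1) - x0*y0*n 0*c0 := by
      linear_combination 2*h4 - 2*h6 + c0*y0*hkey
    have hbp01 : Bp 0 1 = 2*(g 0 - g 2) - x0*y0*n 1*c0 := by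
      linear_combination 2*h4 - 2*h8 + c0*x0*hkey
    have hbp10 : Bp 1 0 = 2*(g 3 - g 4) - x0*y0*n 0*c1 := by
      linear_combination 2*h5 - 2*h7 + c1*y0*hkey
    have hbp11 : Bp 1 1 = 2*(g 3 - g 5) - x0*y0*n 1*c1 := by
      linear_combination 2*h5 - 2*h9 + c1*x0*hkey
    have hap0 : ap 0 = g 1 + g 2 - g 0 + x0*y0*(n 0 + n 1)*c0/2 := by
      linear_combination h4 - hbp00/2 - hbp01/2
    have hap1 : ap 1 = g 4 + g 5 - g 3 + x0*y0*(n 0 + n 1)*c1/2 := by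
      linear_combination h5 - hbp10/2 - hbp11/2
    rw [hbp00, hbp01, hbp10, hbp11] at hJ0 hJ1
    have hs0' : (x0*y0*μp + (1 - x0*y0)*μm) * c0
        + (x0*y0*(μp+lp) + (1 - x0*y0)*(μm+lm)) * (c0 * n 0 + c1 * n 1) * n 0
        = (μp - μm)*(2*(2*(g 0 - g 1))*n 0 + (2*(g 0 - g 2) + 2*(g 3 - g 4))*n 1)
          + (lp - lm)*(2*(g 0 - g 1) + 2*(g 3 - g 5))*n 0 := by
      linear_combination -hJ0 - (x0*y0*μp + (1 - x0*y0)*μm) * c0 * hunit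
    have hs1' : (x0*y0*μp + (1 - x0*y0)*μm) * c1
        + (x0*y0*(μp+lp) + (1 - x0*y0)*(μm+lm)) * (c0 * n 0 + c1 * n 1) * n 1
        = (μp - μm)*((2*(g 3 - g 4) + 2*(g 0 - g 2))*n 0 + 2*(2*(g 3 - g 5))*n 1)
          + (lp - lm)*(2*(g 0 - g 1) + 2*(g 3 - g 5))*n 1 := by
      linear_combination -hJ1 - (x0*y0*μp + (1 - x0*y0)*μm) * c1 * hunit
    have hd : ((x0*y0*μp + (1 - x0*y0)*μm) + (x0*y0*(μp+lp) + (1 - x0*y0)*(μm+lm)))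
        * ((c0 - c0s) * n 0 + (c1 - c1s) * n 1) = 0 := by
      linear_combination n 0*hs0' + n 1*hs1' - n 0*hs0 - n 1*hs1
        - (x0*y0*(μp+lp) + (1 - x0*y0)*(μm+lm)) * ((c0 - c0s) * n 0 + (c1 - c1s) * n 1) * hunit
    have hδ : (c0 - c0s) * n 0 + (c1 - c1s) * n 1 = 0 :=
      (mul_eq_zero.mp hd).resolve_left (by linarith : (0:ℝ) < (x0*y0*μp + (1 - x0*y0)*μm)
        + (x0*y0*(μp+lp) + (1 - x0*y0)*(μm+lm))).ne'
    have hcc0 : c0 = c0s := by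
      have h' : (x0*y0*μp + (1 - x0*y0)*μm) * (c0 - c0s) = 0 := by
        linear_combination hs0' - hs0
          - (x0*y0*(μp+lp) + (1 - x0*y0)*(μm+lm)) * n 0 * hδ
      have := (mul_eq_zero.mp h').resolve_left hAc.ne'
      linarith [sub_eq_zero.mp this]
    have hcc1 : c1 = c1s := by
      have h' : (x0*y0*μp + (1 - x0*y0)*μm) * (c1 - c1s) = 0 := by
        linear_combination hs1' - hs1
          - (x0*y0*(μp+lp) + (1 - x0*y0)*(μm+lm)) * n 1 * hδ
      have := (mul_eq_zero.mp h').resolve_left hAc.ne'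
      linarith [sub_eq_zero.mp this]
    simp only [Prod.mk.injEq]
    refine ⟨⟨?_, ?_⟩, ?_, ?_⟩
    · ext i j; fin_cases i <;> fin_cases j <;> simp only [Fin.mk_zero, Fin.mk_one, Fin.isValue, Matrix.cons_val', Matrix.cons_val_zero,
        Matrix.cons_val_one, Matrix.head_cons, Matrix.empty_val', Matrix.cons_val_fin_one,
        Matrix.head_fin_const, Matrix.of_apply]
      · linear_combination hbp00 - x0*y0*n 0*hcc0
      · linear_combination hbp01 - x0*y0*n 1*hcc0
      · linear_combination hbp10 - x0*y0*n 0*hcc1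
      · linear_combination hbp11 - x0*y0*n 1*hcc1
    · funext i; fin_cases i <;> simp only [Fin.mk_zero, Fin.mk_one, Fin.isValue, Matrix.cons_val', Matrix.cons_val_zero,
        Matrix.cons_val_one, Matrix.head_cons, Matrix.empty_val', Matrix.cons_val_fin_one,
        Matrix.head_fin_const, Matrix.of_apply]
      · linear_combination hap0 + x0*y0*(n 0 + n 1)/2*hcc0
      · linear_combination hap1 + x0*y0*(n 0 + n 1)/2*hcc1
    · ext i j; fin_cases i <;> fin_cases j <;> simp only [Fin.mk_zero, Fin.mk_one, Fin.isValue, Matrix.cons_val', Matrix.cons_val_zero,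
        Matrix.cons_val_one, Matrix.head_cons, Matrix.empty_val', Matrix.cons_val_fin_one,
        Matrix.head_fin_const, Matrix.of_apply]
      · linear_combination hc0 + hbp00 + (n 0 - x0*y0*n 0)*hcc0
      · linear_combination hbm01 + hbp01 + (n 1 - x0*y0*n 1)*hcc0
      · linear_combination hc1 + hbp10 + (n 0 - x0*y0*n 0)*hcc1
      · linear_combination hbm11 + hbp11 + (n 1 - x0*y0*n 1)*hcc1
    · funext i; fin_cases i <;> simp only [Fin.mk_zero, Fin.mk_one, Fin.isValue, Matrix.cons_val', Matrix.cons_val_zero,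
        Matrix.cons_val_one, Matrix.head_cons, Matrix.empty_val', Matrix.cons_val_fin_one,
        Matrix.head_fin_const, Matrix.of_apply]
      · linear_combination ham0 + hap0 + (x0*y0*(n 0 + n 1)/2 - n 0*x0)*hcc0
      · linear_combination ham1 + hap1 + (x0*y0*(n 0 + n 1)/2 - n 0*x0)*hcc1
end

section
/- Fix real numbers x, y with 0<x<1 and 0<y<1, Lamé constants μ+, μ− > 0 and λ+, λ− > 0, and set n1 = y/√(x²+y²), n2 = x/√(x²+y²). Let A be the 5×6 real matrix with rows (1, 1/2, 1/2, 0, 0, 0), (1−y, 0, (1−y²)/2, y, 0, y²/2), (1−x, (1−x²)/2, 0, x, x²/2, 0), (−1, −x, 0, 1, x, 0), (−1, 0, −y, 1, 0, y). Let d1 = (0, (2μ+ + λ+)n1, μ+ n2, 0, −(2μ− + λ−)n1, −μ− n2), d2 = (0, μ+ n2, λ+ n1, 0, −μ− n2, −λ− n1), e1 = (0, λ+ n2, μ+ n1, 0, −λ− n2, −μ− n1), e2 = (0, μ+ n1, (2μ+ + λ+)n2, 0, −μ− n1, −(2μ− + λ−)n2). Let M be the 12×12 real matrix whose rows 1–5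 are the rows of A followed by six zeros, whose row 6 is d1 followed by d2, whose rows 7–11 are six zeros followed by the rows of A, and whose row 12 is e1 followed by e2. Then det M ≠ 0. -/
set_option maxHeartbeats 4000000 in


/-- **Nonvanishing of the determinant of the 12×12 system (Proposition 3.2 / Appendix).**
For any interface cut points `(x,0)`, `(0,y)` with `x, y ∈ (0,1)` and any Lamé constants
`μ⁺, μ⁻, λ⁺, λ⁻ > 0`, the 12×12 coefficient matrix `M` of the linear system determining the
broken Crouzeix–Raviart immersed basis functions — built from the 5×6 block `A`
(edge averages and continuity at the cut points) appearing twice on the diagonal, and the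
stress-jump rows `(d1, d2)` and `(e1, e2)` with unit normal
`(n1, n2) = (y, x)/√(x²+y²)` — has nonzero determinant. -/
theorem broken_CR_system_det_ne_zero
    (x y μp μm lp lm n1 n2 : ℝ)
    (hx : 0 < x) (hx1 : x < 1) (hy : 0 < y) (hy1 : y < 1)
    (hμp : 0 < μp) (hμm : 0 < μm) (hlp : 0 < lp) (hlm : 0 < lm)
    (hn1 : n1 = y / Real.sqrt (x ^ 2 + y ^ 2))
    (hn2 : n2 = x / Real.sqrt (x ^ 2 + y ^ 2))
    (A : Fin 5 → Fin 6 → ℝ)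
    (hA : A = ![![1, 1/2, 1/2, 0, 0, 0],
                ![1 - y, 0, (1 - y ^ 2) / 2, y, 0, y ^ 2 / 2],
                ![1 - x, (1 - x ^ 2) / 2, 0, x, x ^ 2 / 2, 0],
                ![-1, -x, 0, 1, x, 0],
                ![-1, 0, -y, 1, 0, y]])
    (d1 d2 e1 e2 : Fin 6 → ℝ)
    (hd1 : d1 = ![0, (2 * μp + lp) * n1, μp * n2, 0, -((2 * μm + lm) * n1), -(μm * n2)])
    (hd2 : d2 = ![0, μp * n2, lp * n1, 0, -(μm * n2), -(lm * n1)])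
    (he1 : e1 = ![0, lp * n2, μp * n1, 0, -(lm * n2), -(μm * n1)])
    (he2 : e2 = ![0, μp * n1, (2 * μp + lp) * n2, 0, -(μm * n1), -((2 * μm + lm) * n2)])
    (M : Matrix (Fin 12) (Fin 12) ℝ)
    (hM : ∀ i j : Fin 12,
      M i j =
        if hi : (i : ℕ) < 5 then
          (if hj : (j : ℕ) < 6 then A ⟨i, hi⟩ ⟨j, hj⟩ else 0)
        else if (i : ℕ) = 5 then
          (if hj : (j : ℕ) < 6 then d1 ⟨j, hj⟩
           else d2 ⟨(j : ℕ) - 6, by have := j.isLt; omega⟩)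
        else if hi2 : (i : ℕ) < 11 then
          (if hj : (j : ℕ) < 6 then 0
           else A ⟨(i : ℕ) - 6, by omega⟩ ⟨(j : ℕ) - 6, by have := j.isLt; omega⟩)
        else
          (if hj : (j : ℕ) < 6 then e1 ⟨j, hj⟩
           else e2 ⟨(j : ℕ) - 6, by have := j.isLt; omega⟩)) :
    M.det ≠ 0 := by
  intro hdet
  obtain ⟨v, hvne, hv⟩ := (Matrix.exists_mulVec_eq_zero_iff).mpr hdet
  have c0 : ((0 : Fin 12) : ℕ) = 0 := rfl
  have c1 : ((1 : Fin 12) : ℕ) = 1 := rfl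
  have c2 : ((2 : Fin 12) : ℕ) = 2 := rfl
  have c3 : ((3 : Fin 12) : ℕ) = 3 := rfl
  have c4 : ((4 : Fin 12) : ℕ) = 4 := rfl
  have c5 : ((5 : Fin 12) : ℕ) = 5 := rfl
  have c6 : ((6 : Fin 12) : ℕ) = 6 := rfl
  have c7 : ((7 : Fin 12) : ℕ) = 7 := rfl
  have c8 : ((8 : Fin 12) : ℕ) = 8 := rfl
  have c9 : ((9 : Fin 12) : ℕ) = 9 := rfl
  have c10 : ((10 : Fin 12) : ℕ) = 10 := rfl
  have c11 : ((11 : Fin 12) : ℕ) = 11 := rfl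
  have s3 : (Fin.succ 2 : Fin 12) = 3 := rfl
  have s4 : ((Fin.succ 2).succ : Fin 12) = 4 := rfl
  have s5 : (((Fin.succ 2).succ).succ : Fin 12) = 5 := rfl
  have s6 : ((((Fin.succ 2).succ).succ).succ : Fin 12) = 6 := rfl
  have s7 : (((((Fin.succ 2).succ).succ).succ).succ : Fin 12) = 7 := rfl
  have s8 : ((((((Fin.succ 2).succ).succ).succ).succ).succ : Fin 12) = 8 := rfl
  have s9 : (((((((Fin.succ 2).succ).succ).succ).succ).succ).succ : Fin 12) = 9 := rfl
  have s10 : ((((((((Fin.succ 2).succ).succ).succ).succ).succ).succ).succ : Fin 12) = 10 := rfl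
  have s11 : (((((((((Fin.succ 2).succ).succ).succ).succ).succ).succ).succ).succ : Fin 12) = 11 := rfl
  have g1 := congrFun hv ⟨0, by norm_num⟩
  simp [c0,c1,c2,c3,c4,c5,c6,c7,c8,c9,c10,c11,s3,s4,s5,s6,s7,s8,s9,s10,s11, Matrix.mulVec, dotProduct, Fin.sum_univ_succ, hM, hA, hd1, hd2, he1, he2] at g1
  have g2 := congrFun hv ⟨1, by norm_num⟩
  simp [c0,c1,c2,c3,c4,c5,c6,c7,c8,c9,c10,c11,s3,s4,s5,s6,s7,s8,s9,s10,s11, Matrix.mulVec, dotProduct, Fin.sum_univ_succ, hM, hA, hd1, hd2, he1, he2] at g2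
  have g3 := congrFun hv ⟨2, by norm_num⟩
  simp [c0,c1,c2,c3,c4,c5,c6,c7,c8,c9,c10,c11,s3,s4,s5,s6,s7,s8,s9,s10,s11, Matrix.mulVec, dotProduct, Fin.sum_univ_succ, hM, hA, hd1, hd2, he1, he2] at g3
  have g4 := congrFun hv ⟨3, by norm_num⟩
  simp [c0,c1,c2,c3,c4,c5,c6,c7,c8,c9,c10,c11,s3,s4,s5,s6,s7,s8,s9,s10,s11, Matrix.mulVec, dotProduct, Fin.sum_univ_succ, hM, hA, hd1, hd2, he1, he2] at g4
  have g5 := congrFun hv ⟨4, by norm_num⟩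
  simp [c0,c1,c2,c3,c4,c5,c6,c7,c8,c9,c10,c11,s3,s4,s5,s6,s7,s8,s9,s10,s11, Matrix.mulVec, dotProduct, Fin.sum_univ_succ, hM, hA, hd1, hd2, he1, he2] at g5
  have g6 := congrFun hv ⟨5, by norm_num⟩
  simp [c0,c1,c2,c3,c4,c5,c6,c7,c8,c9,c10,c11,s3,s4,s5,s6,s7,s8,s9,s10,s11, Matrix.mulVec, dotProduct, Fin.sum_univ_succ, hM, hA, hd1, hd2, he1, he2] at g6
  have g7 := congrFun hv ⟨6, by norm_num⟩
  simp [c0,c1,c2,c3,c4,c5,c6,c7,c8,c9,c10,c11,s3,s4,s5,s6,s7,s8,s9,s10,s11, Matrix.mulVec, dotProduct, Fin.sum_univ_succ, hM, hA, hd1, hd2, he1, he2] at g7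
  have g8 := congrFun hv ⟨7, by norm_num⟩
  simp [c0,c1,c2,c3,c4,c5,c6,c7,c8,c9,c10,c11,s3,s4,s5,s6,s7,s8,s9,s10,s11, Matrix.mulVec, dotProduct, Fin.sum_univ_succ, hM, hA, hd1, hd2, he1, he2] at g8
  have g9 := congrFun hv ⟨8, by norm_num⟩
  simp [c0,c1,c2,c3,c4,c5,c6,c7,c8,c9,c10,c11,s3,s4,s5,s6,s7,s8,s9,s10,s11, Matrix.mulVec, dotProduct, Fin.sum_univ_succ, hM, hA, hd1, hd2, he1, he2] at g9
  have g10 := congrFun hv ⟨9, by norm_num⟩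
  simp [c0,c1,c2,c3,c4,c5,c6,c7,c8,c9,c10,c11,s3,s4,s5,s6,s7,s8,s9,s10,s11, Matrix.mulVec, dotProduct, Fin.sum_univ_succ, hM, hA, hd1, hd2, he1, he2] at g10
  have g11 := congrFun hv ⟨10, by norm_num⟩
  simp [c0,c1,c2,c3,c4,c5,c6,c7,c8,c9,c10,c11,s3,s4,s5,s6,s7,s8,s9,s10,s11, Matrix.mulVec, dotProduct, Fin.sum_univ_succ, hM, hA, hd1, hd2, he1, he2] at g11
  have g12 := congrFun hv ⟨11, by norm_num⟩
  simp [c0,c1,c2,c3,c4,c5,c6,c7,c8,c9,c10,c11,s3,s4,s5,s6,s7,s8,s9,s10,s11, Matrix.mulVec, dotProduct, Fin.sum_univ_succ, hM, hA, hd1, hd2, he1, he2] at g12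
  have hr : (0:ℝ) < Real.sqrt (x ^ 2 + y ^ 2) := Real.sqrt_pos.mpr (by positivity)
  have hn1' : n1 * Real.sqrt (x ^ 2 + y ^ 2) = y := by
    rw [hn1]; field_simp
  have hn2' : n2 * Real.sqrt (x ^ 2 + y ^ 2) = x := by
    rw [hn2]; field_simp
  have P2 : y * v 2 = x * v 1 := by
    linear_combination (2*(y-x))*g1 + 2*x*g2 - 2*y*g3 + x*y*g4 - x*y*g5
  have P1 : 2*y*v 0 = -((x+y) * v 1) := by
    linear_combination 2*y*g1 - P2
  have P4 : x*y*v 4 = (x*y-1) * v 1 := by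
    have h : x * (x*y*v 4 - (x*y-1) * v 1) = 0 := by
      linear_combination (-(2*y))*g3 + 2*x*y*g4 + P1
    have h2 := (mul_eq_zero.mp h).resolve_left hx.ne'
    linarith only [h2]
  have P5 : y^2*v 5 = (x*y-1) * v 1 := by
    have h : y * (y^2*v 5 - (x*y-1) * v 1) = 0 := by
      linear_combination (-(2*y))*g2 + 2*y^2*g5 + P1 + (1+y^2)*P2
    have h2 := (mul_eq_zero.mp h).resolve_left hy.ne'
    linarith only [h2]
  have P3 : 2*y*v 3 = (2-x-y) * v 1 := by
    linear_combination 2*y*g4 + P1 - 2*P4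
  have Q2 : y * v 8 = x * v 7 := by
    linear_combination (2*(y-x))*g7 + 2*x*g8 - 2*y*g9 + x*y*g10 - x*y*g11
  have Q1 : 2*y*v 6 = -((x+y) * v 7) := by
    linear_combination 2*y*g7 - Q2
  have Q4 : x*y*v 10 = (x*y-1) * v 7 := by
    have h : x * (x*y*v 10 - (x*y-1) * v 7) = 0 := by
      linear_combination (-(2*y))*g9 + 2*x*y*g10 + Q1
    have h2 := (mul_eq_zero.mp h).resolve_left hx.ne'
    linarith only [h2]
  have Q5 : y^2*v 11 = (x*y-1) * v 7 := by
    have h : y * (y^2*v 11 - (x*y-1) * v 7) = 0 := by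
      linear_combination (-(2*y))*g8 + 2*y^2*g11 + Q1 + (1+y^2)*Q2
    have h2 := (mul_eq_zero.mp h).resolve_left hy.ne'
    linarith only [h2]
  have Q3 : 2*y*v 9 = (2-x-y) * v 7 := by
    linear_combination 2*y*g10 + Q1 - 2*Q4
  have S1 : ((μp*x*y + μm*(1-x*y))*(x^2+2*y^2) + (lp*x*y + lm*(1-x*y))*y^2) * v 1 + (((μp*x*y + μm*(1-x*y)) + (lp*x*y + lm*(1-x*y)))*(x*y)) * v 7 = 0 := by
    linear_combination x*y^2*Real.sqrt (x ^ 2 + y ^ 2)*g6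
      - (x*y^2*((2*μp+lp)*v 1 + lp*v 8 - (2*μm+lm)*v 4 - lm*v 11))*hn1'
      - (x*y^2*(μp*v 2 + μp*v 7 - μm*v 5 - μm*v 10))*hn2'
      - μp*x^2*y*P2 + (2*μm+lm)*y^2*P4 + μm*x^2*P5
      - lp*x*y^2*Q2 + μm*x*y*Q4 + lm*x*y*Q5
  have S2 : (((μp*x*y + μm*(1-x*y)) + (lp*x*y + lm*(1-x*y)))*(x*y)) * v 1 + ((μp*x*y + μm*(1-x*y))*(2*x^2+y^2) + (lp*x*y + lm*(1-x*y))*x^2) * v 7 = 0 := by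
    linear_combination x*y^2*Real.sqrt (x ^ 2 + y ^ 2)*g12
      - (x*y^2*(μp*v 2 + μp*v 7 - μm*v 5 - μm*v 10))*hn1'
      - (x*y^2*(lp*v 1 + (2*μp+lp)*v 8 - lm*v 4 - (2*μm+lm)*v 11))*hn2'
      - μp*x*y^2*P2 + lm*x*y*P4 + μm*x*y*P5
      - (2*μp+lp)*x^2*y*Q2 + μm*y^2*Q4 + (2*μm+lm)*x^2*Q5
  have hz : 0 < 1 - x*y := by
    have h1 := mul_pos hx (show 0 < 1-y by linarith only [hy1])
    linarith only [h1, hx1]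
  have hPm : 0 < (μp*x*y + μm*(1-x*y)) := by
    have h1 := mul_pos hμm hz
    have h2 := mul_pos (mul_pos hμp hx) hy
    linarith only [h1, h2]
  have hQm : 0 < (lp*x*y + lm*(1-x*y)) := by
    have h1 := mul_pos hlm hz
    have h2 := mul_pos (mul_pos hlp hx) hy
    linarith only [h1, h2]
  have hdetpos : 0 < (((μp*x*y + μm*(1-x*y))*(x^2+2*y^2) + (lp*x*y + lm*(1-x*y))*y^2) * ((μp*x*y + μm*(1-x*y))*(2*x^2+y^2) + (lp*x*y + lm*(1-x*y))*x^2) - (((μp*x*y + μm*(1-x*y)) + (lp*x*y + lm*(1-x*y)))*(x*y))^2) := by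
    have hkey : (((μp*x*y + μm*(1-x*y))*(x^2+2*y^2) + (lp*x*y + lm*(1-x*y))*y^2) * ((μp*x*y + μm*(1-x*y))*(2*x^2+y^2) + (lp*x*y + lm*(1-x*y))*x^2) - (((μp*x*y + μm*(1-x*y)) + (lp*x*y + lm*(1-x*y)))*(x*y))^2) = (2*(μp*x*y + μm*(1-x*y))^2 + (μp*x*y + μm*(1-x*y))*(lp*x*y + lm*(1-x*y))) * (x^2+y^2)^2 := by ring
    rw [hkey]
    have h1 : 0 < 2*(μp*x*y + μm*(1-x*y))^2 + (μp*x*y + μm*(1-x*y))*(lp*x*y + lm*(1-x*y)) := by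
      have h3 := mul_pos hPm hQm
      have h4 := mul_pos hPm hPm
      linarith only [h3, h4]
    have h2 : (0:ℝ) < (x^2+y^2)^2 := by positivity
    exact mul_pos h1 h2
  have hv7 : v 7 = 0 := by
    have h70 : (((μp*x*y + μm*(1-x*y))*(x^2+2*y^2) + (lp*x*y + lm*(1-x*y))*y^2) * ((μp*x*y + μm*(1-x*y))*(2*x^2+y^2) + (lp*x*y + lm*(1-x*y))*x^2) - (((μp*x*y + μm*(1-x*y)) + (lp*x*y + lm*(1-x*y)))*(x*y))^2) * v 7 = 0 := by
      linear_combination ((μp*x*y + μm*(1-x*y))*(x^2+2*y^2) + (lp*x*y + lm*(1-x*y))*y^2) * S2 - (((μp*x*y + μm*(1-x*y)) + (lp*x*y + lm*(1-x*y)))*(x*y)) * S1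
    exact (mul_eq_zero.mp h70).resolve_left hdetpos.ne'
  have hα : 0 < ((μp*x*y + μm*(1-x*y))*(x^2+2*y^2) + (lp*x*y + lm*(1-x*y))*y^2) := by
    exact add_pos (mul_pos hPm (by positivity)) (mul_pos hQm (by positivity))
  have hv1 : v 1 = 0 := by
    have h10 : ((μp*x*y + μm*(1-x*y))*(x^2+2*y^2) + (lp*x*y + lm*(1-x*y))*y^2) * v 1 = 0 := by
      linear_combination S1 - (((μp*x*y + μm*(1-x*y)) + (lp*x*y + lm*(1-x*y)))*(x*y)) * hv7
    exact (mul_eq_zero.mp h10).resolve_left hα.ne'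
  have hxy : (0:ℝ) < x*y := mul_pos hx hy
  have hw0 : v 0 = 0 := by
    have h : (2*y) * v 0 = 0 := by linear_combination P1 - (x+y)*hv1
    exact (mul_eq_zero.mp h).resolve_left (by positivity)
  have hw2 : v 2 = 0 := by
    have h : y * v 2 = 0 := by linear_combination P2 + x*hv1
    exact (mul_eq_zero.mp h).resolve_left hy.ne'
  have hw3 : v 3 = 0 := by
    have h : (2*y) * v 3 = 0 := by linear_combination P3 + (2-x-y)*hv1
    exact (mul_eq_zero.mp h).resolve_left (by positivity)
  have hw4 : v 4 = 0 := by
    have h : (x*y) * v 4 = 0 := by linear_combination P4 + (x*y-1)*hv1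
    exact (mul_eq_zero.mp h).resolve_left hxy.ne'
  have hw5 : v 5 = 0 := by
    have h : y^2 * v 5 = 0 := by linear_combination P5 + (x*y-1)*hv1
    exact (mul_eq_zero.mp h).resolve_left (by positivity)
  have hw6 : v 6 = 0 := by
    have h : (2*y) * v 6 = 0 := by linear_combination Q1 - (x+y)*hv7
    exact (mul_eq_zero.mp h).resolve_left (by positivity)
  have hw8 : v 8 = 0 := by
    have h : y * v 8 = 0 := by linear_combination Q2 + x*hv7
    exact (mul_eq_zero.mp h).resolve_left hy.ne'
  have hw9 : v 9 = 0 := by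
    have h : (2*y) * v 9 = 0 := by linear_combination Q3 + (2-x-y)*hv7
    exact (mul_eq_zero.mp h).resolve_left (by positivity)
  have hw10 : v 10 = 0 := by
    have h : (x*y) * v 10 = 0 := by linear_combination Q4 + (x*y-1)*hv7
    exact (mul_eq_zero.mp h).resolve_left hxy.ne'
  have hw11 : v 11 = 0 := by
    have h : y^2 * v 11 = 0 := by linear_combination Q5 + (x*y-1)*hv7
    exact (mul_eq_zero.mp h).resolve_left (by positivity)
  apply hvne
  funext i
  fin_cases i <;> simp only [Pi.zero_apply] <;> assumption
end
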